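/- For integers d ≤ m < 2d with d ≥ 2, if n' non-miners each have m - d + 1 incoming edges from miners and this accounts for all miner out-edges not used in the miner clique, i.e., n'(m-d+1) = m(d-1) - m(m-1)/2, then n = m + n' = (m/2)·(m+1)/(m-d+1), and this quantity is strictly less than 2d². -/
import Mathlib


/-- From the proof of Lemma 4.9: for `d ≤ m < 2d` with `d ≥ 2`, if `n'` non-miners each
receive `m - d + 1` edges from the miners and this accounts for all miner out-edges not
used in the miner clique, i.e. `n'(m-d+1) = m(d-1) - m(m-1)/2`, then
`n = m + n' = (m/2)·(m+1)/(m-d+1)`, and this quantity is strictly less than `2d²`. -/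
theorem stmt9 (m d n' : ℕ) (hd : 2 ≤ d) (h1 : d ≤ m) (h2 : m < 2 * d)
    (hn' : (n' : ℚ) * ((m : ℚ) - d + 1) = (m : ℚ) * ((d : ℚ) - 1) - (m : ℚ) * ((m : ℚ) - 1) / 2) :
    (m : ℚ) + n' = ((m : ℚ) / 2) * (((m : ℚ) + 1) / ((m : ℚ) - d + 1)) ∧
    (m : ℚ) + n' < 2 * (d : ℚ) ^ 2 := by
  have hdm : (d : ℚ) ≤ (m : ℚ) := by exact_mod_cast h1
  have hm2d : (m : ℚ) ≤ 2 * d - 1 := by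
    have : (m : ℚ) + 1 ≤ 2 * d := by exact_mod_cast h2
    linarith
  have hd2 : (2 : ℚ) ≤ d := by exact_mod_cast hd
  have hc : (0 : ℚ) < (m : ℚ) - d + 1 := by linarith
  have hn0 : (0 : ℚ) ≤ (n' : ℚ) := Nat.cast_nonneg n'
  have hm0 : (0 : ℚ) ≤ (m : ℚ) := Nat.cast_nonneg m
  constructor
  · rw [div_mul_div_comm, eq_div_iff (by positivity)]
    ring_nf
    nlinarith [hn']
  · nlinarith [hn', mul_nonneg hn0 (le_of_lt hc)]
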